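/- Let pc_n be the total number of left children summed over all treeshelves of size n avoiding the pattern (left child having a right child). Then for every n ≥ 0, pc_n = (n+1)·b_n − b_{n+1}, where b_n denotes the n-th Bell number (the number of set partitions of {1,…,n}). Equivalently, the exponential generating function of (pc_n) is (z e^z − e^z + 1) e^{e^z − 1}. -/

import Mathlib

/-- Binary trees with natural-number labels, where each child slot (left/right)
is explicit; `leaf` denotes the absence of a subtree.  A *treeshelf* will be such
a tree whose labels are exactly `{1, …, n}` and increase away from the root. -/
inductive TShelf : Type where
  | leaf : TShelf
  | node : ℕ → TShelf → TShelf → TShelf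

namespace TShelf

/-- Whether the tree is nonempty (i.e. an actual node). -/
def isNode : TShelf → Bool
  | leaf => false
  | node _ _ _ => true

/-- The label of the root (junk value `0` for the empty tree). -/
def rootLabel : TShelf → ℕ
  | leaf => 0
  | node a _ _ => a

/-- The left subtree. -/
def left : TShelf → TShelf
  | leaf => leaf
  | node _ l _ => l

/-- The right subtree. -/
def right : TShelf → TShelf
  | leaf => leaf
  | node _ _ r => r

/-- The multiset of labels occurring in the tree. -/
def labels : TShelf → Multiset ℕ
  | leaf => 0
  | node a l r => a ::ₘ (l.labels + r.labels)

/-- Every child's label is greater than its parent's label. -/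
def increasing : TShelf → Bool
  | leaf => true
  | node a l r =>
      (!l.isNode || decide (a < l.rootLabel)) &&
      (!r.isNode || decide (a < r.rootLabel)) &&
      l.increasing && r.increasing

/-- The number of left children (nodes attached to their parent as a left child). -/
def numLeft : TShelf → ℕ
  | leaf => 0
  | node _ l r => (if l.isNode then 1 else 0) + l.numLeft + r.numLeft

/-- `t` is a treeshelf of size `n`: its nodes are labeled bijectively by
`{1, …, n}` and labels increase from parents to children. -/
def IsShelf (n : ℕ) (t : TShelf) : Prop :=
  t.labels = (Finset.Icc 1 n).val ∧ t.increasing = true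

/-- Avoidance of the pattern "a left child having a right child":
no node is simultaneously the left child of its parent and has a right child. -/
def avoidsLR : TShelf → Bool
  | leaf => true
  | node _ l r => !(l.isNode && l.right.isNode) && l.avoidsLR && r.avoidsLR

/-- Avoidance of the pattern "a left child having a left child":
no node is simultaneously the left child of its parent and has a left child. -/
def avoidsLL : TShelf → Bool
  | leaf => true
  | node _ l r => !(l.isNode && l.left.isNode) && l.avoidsLL && r.avoidsLL

/-- Avoidance of the pattern "left label smaller than right label": no node has
both a left and a right child with the left child's label smaller than the
right child's label. -/
def avoidsLess : TShelf → Bool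
  | leaf => true
  | node _ l r =>
      !(l.isNode && r.isNode && decide (l.rootLabel < r.rootLabel)) &&
      l.avoidsLess && r.avoidsLess

/-- Canonical representation of unordered sibling pairs: whenever a node has two
children, the left one carries the smaller label.  Trees satisfying this are
canonical representatives of trees whose sibling pairs are unordered. -/
def pairCanon : TShelf → Bool
  | leaf => true
  | node _ l r =>
      (!(l.isNode && r.isNode) || decide (l.rootLabel < r.rootLabel)) &&
      l.pairCanon && r.pairCanon

/-- Canonical representation of untagged only children: every only child is a
right child.  Together with `pairCanon`, trees satisfying this are canonical
representatives of unordered binary increasing trees. -/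
def singleRight : TShelf → Bool
  | leaf => true
  | node _ l r => (!l.isNode || r.isNode) && l.singleRight && r.singleRight

end TShelf

open TShelf Finset

/-- left chain -/
def chain : List ℕ → TShelf
  | [] => .leaf
  | a :: s => .node a (chain s) .leaf

@[simp] lemma chain_labels (l : List ℕ) : (chain l).labels = ↑l := by
  induction l with
  | nil => rfl
  | cons a t ih => simp [chain, labels, ih]

lemma chain_isNode (l : List ℕ) : (chain l).isNode = !l.isEmpty := by
  cases l <;> rfl

lemma chain_root (a : ℕ) (t : List ℕ) : (chain (a :: t)).rootLabel = a := rfl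

lemma chain_right (l : List ℕ) : (chain l).right = .leaf := by
  cases l <;> rfl

lemma chain_avoidsLR (l : List ℕ) : (chain l).avoidsLR = true := by
  induction l with
  | nil => rfl
  | cons a t ih =>
    show avoidsLR (.node a (chain t) .leaf) = true
    simp [avoidsLR, ih, chain_right, isNode]

lemma chain_increasing (l : List ℕ) (h : l.Pairwise (· < ·)) : (chain l).increasing = true := by
  induction l with
  | nil => rfl
  | cons a t ih =>
    have h2 := h.of_cons
    show increasing (.node a (chain t) .leaf) = true
    cases t with
    | nil => simp [chain, increasing, isNode]
    | cons b u =>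
      have hab : a < b := (List.pairwise_cons.mp h).1 b (by simp)
      have h3 := ih h2
      simp only [show chain (b :: u) = .node b (chain u) .leaf from rfl, increasing,
        Bool.and_eq_true, Bool.or_eq_true, Bool.not_eq_true', decide_eq_true_eq] at h3
      simp [increasing, isNode, chain_root, hab, chain_isNode, h3]
      exact ih h2

lemma chain_numLeft (l : List ℕ) :
    (if (chain l).isNode then 1 else 0) + (chain l).numLeft = l.length := by
  induction l with
  | nil => rfl
  | cons a t ih => simp [chain, numLeft, isNode] at ih ⊢; omega

lemma chain_injective : Function.Injective chain := by
  intro l1 l2 h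
  induction l1 generalizing l2 with
  | nil => cases l2 with | nil => rfl | cons b u => simp [chain] at h
  | cons a t ih =>
    cases l2 with
    | nil => simp [chain] at h
    | cons b u =>
      simp only [chain, TShelf.node.injEq] at h
      simp [h.1, ih h.2.1]

namespace Finpartition

variable {s : Finset ℕ} (P : Finpartition s)

lemma parts_of_empty (P : Finpartition (∅ : Finset ℕ)) : P.parts = ∅ := by
  rw [Finset.eq_empty_iff_forall_notMem]
  intro b hb
  have h1 : b ⊆ ∅ := P.le hb
  have h2 : b = ∅ := Finset.subset_empty.mp h1
  rw [h2] at hb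
  exact P.bot_notMem (by simpa using hb)

lemma avoid_parts_of_mem {b : Finset ℕ} (hb : b ∈ P.parts) :
    (P.avoid b).parts = P.parts.erase b := by
  ext c
  rw [P.mem_avoid, Finset.mem_erase]
  constructor
  · rintro ⟨d, hd, hdb, rfl⟩
    have hdbne : d ≠ b := fun h => hdb (h ▸ le_refl _)
    have : Disjoint d b := P.disjoint hd hb hdbne
    rw [Finset.sdiff_eq_self_of_disjoint this]
    exact ⟨hdbne, hd⟩
  · rintro ⟨hcb, hc⟩
    have : Disjoint c b := P.disjoint hc hb hcb
    refine ⟨c, hc, ?_, Finset.sdiff_eq_self_of_disjoint this⟩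
    intro hle
    obtain ⟨x, hx⟩ := P.nonempty_of_mem_parts hc
    exact Finset.disjoint_left.mp this hx (hle hx)

end Finpartition
open TShelf Finset

def G : (s : Finset ℕ) → Finpartition s → TShelf := fun s P =>
  if hs : s.Nonempty then
    have hcard : (s \ P.part (s.min' hs)).card < s.card :=
      Finset.card_lt_card (Finset.sdiff_ssubset (P.le (P.part_mem.2 (s.min'_mem hs)))
        ⟨_, P.mem_part (s.min'_mem hs)⟩)
    .node (s.min' hs)
      (chain (((P.part (s.min' hs)).erase (s.min' hs)).sort (· ≤ ·)))
      (G (s \ P.part (s.min' hs)) (P.avoid (P.part (s.min' hs))))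
  else .leaf
termination_by s => s.card
decreasing_by exact hcard

lemma G_of_not_nonempty {s : Finset ℕ} (h : ¬ s.Nonempty) (P : Finpartition s) :
    G s P = .leaf := by
  rw [G]; simp [h]

lemma G_empty (P : Finpartition (∅ : Finset ℕ)) : G ∅ P = .leaf := by
  rw [G]; simp

lemma G_spec {s : Finset ℕ} (hs : s.Nonempty) (P : Finpartition s) :
    G s P = .node (s.min' hs)
      (chain (((P.part (s.min' hs)).erase (s.min' hs)).sort (· ≤ ·)))
      (G (s \ P.part (s.min' hs)) (P.avoid (P.part (s.min' hs)))) := by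
  rw [G]; simp [hs]

lemma G_root {s : Finset ℕ} (hs : s.Nonempty) (P : Finpartition s) :
    (G s P).rootLabel = s.min' hs ∧ (G s P).isNode = true := by
  rw [G_spec hs]; exact ⟨rfl, rfl⟩

lemma chain_root_mem {l : List ℕ} (hl : l ≠ []) : (chain l).rootLabel ∈ l := by
  cases l with
  | nil => simp at hl
  | cons a t => simp [chain, rootLabel]

lemma G_props (s : Finset ℕ) : ∀ (P : Finpartition s),
    (G s P).labels = s.val ∧ (G s P).increasing = true ∧ (G s P).avoidsLR = true ∧
      (G s P).numLeft + P.parts.card = s.card := by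
  induction s using Finset.strongInduction with
  | _ s ih =>
    intro P
    rcases s.eq_empty_or_nonempty with rfl | hs
    · rw [G_empty]
      simp [labels, increasing, avoidsLR, numLeft, P.parts_of_empty]
    · set m := s.min' hs with hm_def
      have hms : m ∈ s := s.min'_mem hs
      set b := P.part m with hb_def
      have hbP : b ∈ P.parts := P.part_mem.2 hms
      have hbs : b ⊆ s := P.le hbP
      have hmb : m ∈ b := P.mem_part hms
      have hss : s \ b ⊂ s := Finset.sdiff_ssubset hbs ⟨m, hmb⟩
      obtain ⟨IH1, IH2, IH3, IH4⟩ := ih (s \ b) hss (P.avoid b)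
      set l := (b.erase m).sort (· ≤ ·) with hl_def
      have hlv : (↑l : Multiset ℕ) = (b.erase m).val := Finset.sort_eq _ _
      have hmem_l : ∀ x ∈ l, m < x := by
        intro x hx
        rw [Finset.mem_sort] at hx
        have hxb : x ∈ b := Finset.mem_of_mem_erase hx
        have hxm : x ≠ m := Finset.ne_of_mem_erase hx
        exact lt_of_le_of_ne (s.min'_le x (hbs hxb)) (Ne.symm hxm)
      rw [G_spec hs, ← hm_def, ← hb_def, ← hl_def]
      refine ⟨?_, ?_, ?_, ?_⟩
      · show (m ::ₘ ((chain l).labels + _)) = s.val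
        rw [chain_labels, IH1, hlv, Finset.sdiff_val, Finset.erase_val, ← Multiset.cons_add,
          Multiset.cons_erase (show m ∈ b.val from hmb),
          add_tsub_cancel_of_le (Finset.val_le_iff.mpr hbs)]
      · show increasing (.node m (chain l) (G (s \ b) (P.avoid b))) = true
        have hchain : (chain l).increasing = true :=
          chain_increasing l (Finset.sortedLT_sort _).pairwise
        have h1 : (chain l).isNode = false ∨ m < (chain l).rootLabel := by
          rcases eq_or_ne l [] with hl | hl
          · exact Or.inl (by rw [hl]; rfl)
          · exact Or.inr (hmem_l _ (chain_root_mem hl))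
        have h2 : (G (s \ b) (P.avoid b)).isNode = false ∨
            m < (G (s \ b) (P.avoid b)).rootLabel := by
          rcases (s \ b).eq_empty_or_nonempty with he | hne
          · rw [G_of_not_nonempty (by simp [he]) (P.avoid b)]; exact Or.inl rfl
          · right
            obtain ⟨hr, _⟩ := G_root hne (P.avoid b)
            rw [hr]
            have h3 : (s \ b).min' hne ∈ s \ b := Finset.min'_mem _ _
            have h4 := Finset.mem_sdiff.mp h3
            exact lt_of_le_of_ne (s.min'_le _ h4.1) (fun he => (h4.2 (he ▸ hmb)))
        simp only [increasing, Bool.and_eq_true, Bool.or_eq_true, Bool.not_eq_true',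
          decide_eq_true_eq]
        exact ⟨⟨⟨h1, h2⟩, hchain⟩, IH2⟩
      · show avoidsLR (.node m (chain l) (G (s \ b) (P.avoid b))) = true
        simp only [avoidsLR, Bool.and_eq_true, Bool.not_eq_true']
        refine ⟨⟨?_, chain_avoidsLR l⟩, IH3⟩
        rw [chain_right]
        simp [isNode]
      · show (if (chain l).isNode then 1 else 0) + (chain l).numLeft +
            (G (s \ b) (P.avoid b)).numLeft + P.parts.card = s.card
        have h1 := chain_numLeft l
        have h2 : l.length = (b.erase m).card := Finset.length_sort _
        have h3 : (b.erase m).card + 1 = b.card := Finset.card_erase_add_one hmb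
        have h4 : (P.avoid b).parts.card = P.parts.card - 1 := by
          rw [P.avoid_parts_of_mem hbP, Finset.card_erase_of_mem hbP]
        have h5 : 1 ≤ P.parts.card := Finset.card_pos.mpr ⟨b, hbP⟩
        have h6 : (s \ b).card + b.card = s.card := Finset.card_sdiff_add_card_eq_card hbs
        omega
lemma G_congr {s t : Finset ℕ} (h : s = t) (P : Finpartition s) (Q : Finpartition t)
    (hpq : P.parts = Q.parts) : G s P = G t Q := by
  subst h
  obtain rfl : P = Q := Finpartition.ext hpq
  rfl

lemma G_injective (s : Finset ℕ) : Function.Injective (G s) := by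
  induction s using Finset.strongInduction with
  | _ s ih =>
    intro P Q h
    rcases s.eq_empty_or_nonempty with rfl | hs
    · exact Finpartition.ext (by rw [P.parts_of_empty, Q.parts_of_empty])
    · set m := s.min' hs with hm_def
      have hms : m ∈ s := s.min'_mem hs
      rw [G_spec hs P, G_spec hs Q] at h
      rw [TShelf.node.injEq] at h
      obtain ⟨-, hc, hr⟩ := h
      have hsort := chain_injective hc
      have he : (P.part m).erase m = (Q.part m).erase m := by
        have h2 := congrArg (fun l : List ℕ => (↑l : Multiset ℕ)) hsort
        simp only [Finset.sort_eq] at h2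
        exact Finset.val_inj.mp h2
      have hpart : P.part m = Q.part m := by
        rw [← Finset.insert_erase (P.mem_part hms), ← Finset.insert_erase (Q.mem_part hms), he]
      rw [hpart] at hr
      have hbQ : Q.part m ∈ Q.parts := Q.part_mem.2 hms
      have hbP : Q.part m ∈ P.parts := hpart ▸ P.part_mem.2 hms
      have hss : s \ Q.part m ⊂ s := Finset.sdiff_ssubset (Q.le hbQ) ⟨m, Q.mem_part hms⟩
      have hav : P.avoid (Q.part m) = Q.avoid (Q.part m) := ih _ hss hr
      apply Finpartition.ext
      rw [← Finset.insert_erase hbP, ← Finset.insert_erase hbQ,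
        ← P.avoid_parts_of_mem hbP, ← Q.avoid_parts_of_mem hbQ, hav]

def toList : TShelf → List ℕ
  | .leaf => []
  | .node a l _ => a :: toList l

lemma chain_toList {t : TShelf} (hav : t.avoidsLR = true) (hr : t.right.isNode = false) :
    chain (toList t) = t := by
  induction t with
  | leaf => rfl
  | node a l r ihl ihr =>
    have hr' : r = .leaf := by
      cases r with
      | leaf => rfl
      | node b l' r' => simp [right, isNode] at hr
    subst hr'
    simp only [avoidsLR, Bool.and_eq_true, Bool.not_eq_true', Bool.and_eq_false_iff] at hav
    have hlr : l.right.isNode = false := by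
      cases l with
      | leaf => rfl
      | node b l' r' =>
        rcases hav.1.1 with h | h
        · simp [isNode] at h
        · exact h
    show TShelf.node a (chain (toList l)) .leaf = _
    rw [ihl hav.1.2 hlr]

lemma root_min {t : TShelf} (hinc : t.increasing = true) :
    ∀ x ∈ t.labels, t.rootLabel ≤ x := by
  induction t with
  | leaf => simp [labels]
  | node a l r ihl ihr =>
    simp only [increasing, Bool.and_eq_true, Bool.or_eq_true, Bool.not_eq_true',
      decide_eq_true_eq] at hinc
    obtain ⟨⟨⟨hl, hr⟩, hincl⟩, hincr⟩ := hinc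
    intro x hx
    simp only [labels, Multiset.mem_cons, Multiset.mem_add] at hx
    rcases hx with rfl | hx | hx
    · exact le_refl _
    · rcases hl with h | h
      · cases l with
        | leaf => simp [labels] at hx
        | node _ _ _ => simp [isNode] at h
      · exact le_of_lt (lt_of_lt_of_le h (ihl hincl x hx))
    · rcases hr with h | h
      · cases r with
        | leaf => simp [labels] at hx
        | node _ _ _ => simp [isNode] at h
      · exact le_of_lt (lt_of_lt_of_le h (ihr hincr x hx))

lemma chain_sorted {l : List ℕ} (h : (chain l).increasing = true) : l.Pairwise (· < ·) := by
  induction l with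
  | nil => exact List.Pairwise.nil
  | cons a t ih =>
    simp only [show chain (a :: t) = .node a (chain t) .leaf from rfl, increasing,
      Bool.and_eq_true, Bool.or_eq_true, Bool.not_eq_true', decide_eq_true_eq] at h
    obtain ⟨⟨⟨ha, -⟩, hct⟩, -⟩ := h
    have hst := ih hct
    rw [List.pairwise_cons]
    refine ⟨?_, hst⟩
    intro x hx
    cases t with
    | nil => simp at hx
    | cons c u =>
      have hac : a < c := by
        rcases ha with h | h
        · simp [chain_isNode] at h
        · exact h
      rcases List.mem_cons.mp hx with rfl | hxu
      · exact hac
      · exact hac.trans ((List.pairwise_cons.mp hst).1 x hxu)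

lemma G_surjective (s : Finset ℕ) : ∀ (t : TShelf), t.labels = s.val →
    t.increasing = true → t.avoidsLR = true → ∃ P : Finpartition s, G s P = t := by
  induction s using Finset.strongInduction with
  | _ s ih =>
    intro t hlab hinc hav
    cases t with
    | leaf =>
      have hse : s = ∅ := by
        rw [← Finset.val_eq_zero]
        exact hlab ▸ rfl
      subst hse
      exact ⟨(default : Finpartition (⊥ : Finset ℕ)), G_empty _⟩
    | node a l r =>
      have hs : s.Nonempty :=
        ⟨a, Finset.mem_def.mpr (hlab ▸ (Multiset.mem_cons_self a _))⟩
      have hinc0 := hinc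
      simp only [avoidsLR, Bool.and_eq_true, Bool.not_eq_true', Bool.and_eq_false_iff] at hav
      simp only [increasing, Bool.and_eq_true, Bool.or_eq_true, Bool.not_eq_true',
        decide_eq_true_eq] at hinc
      obtain ⟨⟨havl0, havl⟩, havr⟩ := hav
      obtain ⟨⟨⟨hil, hir⟩, hincl⟩, hincr⟩ := hinc
      have hlr : l.right.isNode = false := by
        cases l with
        | leaf => rfl
        | node b l' r' =>
          rcases havl0 with h | h
          · simp [isNode] at h
          · exact h
      have hchl : chain (toList l) = l := chain_toList havl hlr
      set L := toList l with hL_def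
      have hlabs : (a ::ₘ (↑L + r.labels) : Multiset ℕ) = s.val := by
        rw [← hlab]
        show _ = a ::ₘ (l.labels + r.labels)
        rw [← hchl, chain_labels]
      have hnodup : (a ::ₘ ((↑L : Multiset ℕ) + r.labels)).Nodup := hlabs ▸ s.nodup
      rw [Multiset.nodup_cons, Multiset.nodup_add] at hnodup
      obtain ⟨hna, hnL, hnr, hdLr⟩ := hnodup
      have hbnodup : (a ::ₘ (↑L : Multiset ℕ)).Nodup :=
        Multiset.nodup_cons.mpr ⟨fun h => hna (Multiset.mem_add.mpr (Or.inl h)), hnL⟩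
      set b : Finset ℕ := ⟨a ::ₘ ↑L, hbnodup⟩ with hb_def
      set s' : Finset ℕ := ⟨r.labels, hnr⟩ with hs'_def
      have hmem_b : ∀ x, x ∈ b ↔ x ∈ (a ::ₘ (↑L : Multiset ℕ)) := fun x => Iff.rfl
      have hmem_s' : ∀ x, x ∈ s' ↔ x ∈ r.labels := fun x => Iff.rfl
      have ha_in_b : a ∈ b := (hmem_b a).mpr (Multiset.mem_cons_self a _)
      have hval : s.val = b.val + s'.val := by
        rw [← hlabs]
        show a ::ₘ (↑L + r.labels) = (a ::ₘ ↑L) + r.labels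
        rw [Multiset.cons_add]
      -- s' ⊂ s
      have hbpos : (0 : Multiset ℕ) < b.val := by
        apply Multiset.lt_iff_cons_le.mpr ⟨a, ?_⟩
        show a ::ₘ 0 ≤ a ::ₘ ↑L
        exact Multiset.cons_le_cons a (Multiset.zero_le _)
      have hss' : s' ⊂ s := by
        rw [← Finset.val_lt_iff, hval]
        exact lt_add_of_pos_left _ hbpos
      -- inductive hypothesis
      obtain ⟨P', hP'⟩ := ih s' hss' r rfl hincr havr
      -- extend
      have hdisj : Disjoint s' b := by
        rw [Finset.disjoint_left]
        intro x hx hxb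
        rcases Multiset.mem_cons.mp ((hmem_b x).mp hxb) with rfl | hxL
        · exact hna (Multiset.mem_add.mpr (Or.inr hx))
        · exact Multiset.disjoint_left.mp hdLr hxL hx
      have hbne : b ≠ ⊥ := by
        intro h
        have h2 : a ∈ (⊥ : Finset ℕ) := h ▸ ha_in_b
        exact Finset.notMem_empty a (Finset.bot_eq_empty ▸ h2)
      have hsup : s' ⊔ b = s := by
        ext x
        rw [Finset.sup_eq_union, Finset.mem_union, Finset.mem_def (s := s), hval,
          Multiset.mem_add]
        exact or_comm
      set P : Finpartition s := P'.extend hbne hdisj hsup with hP_def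
      refine ⟨P, ?_⟩
      rw [G_spec hs P]
      -- root label is a
      have hma : s.min' hs = a := by
        apply le_antisymm
        · exact s.min'_le a (Finset.mem_def.mpr (hlabs ▸ Multiset.mem_cons_self a _))
        · exact root_min hinc0 _ (hlab.symm ▸ Finset.mem_def.mp (s.min'_mem hs))
      have hbmem : b ∈ P.parts := by
        rw [hP_def]
        exact Finset.mem_insert_self _ _
      have hpart : P.part a = b :=
        P.part_eq_of_mem hbmem ha_in_b
      have haL : a ∉ L := fun h => hna (Multiset.mem_add.mpr (Or.inl (by exact_mod_cast h)))
      have herase : (b.erase a).val = (↑L : Multiset ℕ) := by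
        rw [Finset.erase_val]
        show (a ::ₘ ↑L).erase a = _
        rw [Multiset.erase_cons_head]
      have hsort : (b.erase a).sort (· ≤ ·) = L := by
        haveI : IsAntisymm ℕ (· ≤ ·) := ⟨fun a b => le_antisymm⟩
        have hperm : List.Perm ((b.erase a).sort (· ≤ ·)) L := by
          rw [← Multiset.coe_eq_coe, Finset.sort_eq, herase]
        have hs1 := Finset.pairwise_sort (b.erase a) (· ≤ ·)
        have hs2 : L.Pairwise (· ≤ ·) := (chain_sorted (hchl ▸ hincl)).imp le_of_lt
        exact hperm.eq_of_pairwise' hs1 hs2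
      have hsdiff : s \ b = s' := by
        apply Finset.val_inj.mp
        rw [Finset.sdiff_val, hval, add_tsub_cancel_left]
      have hbnotP' : b ∉ P'.parts := by
        intro h
        have hsub : b ⊆ s' := P'.le h
        exact Finset.disjoint_left.mp hdisj (hsub ha_in_b) ha_in_b
      have havoid : (P.avoid b).parts = P'.parts := by
        rw [P.avoid_parts_of_mem hbmem, hP_def]
        show (insert b P'.parts).erase b = _
        rw [Finset.erase_insert hbnotP']
      have hrest : G (s \ b) (P.avoid b) = r := by
        rw [G_congr hsdiff (P.avoid b) P' havoid, hP']
      rw [hma, hpart, hsort, hrest, hchl]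
section Bell

variable {x : ℕ} {s : Finset ℕ}

/-- The map realizing `B(insert x s) = Σ_P (#parts P + 1)`. -/
def addTo (hx : x ∉ s) : (Σ P : Finpartition s, Option {b // b ∈ P.parts}) →
    Finpartition (insert x s) := fun u =>
  match u with
  | ⟨P, none⟩ => P.extend (b := {x})
      (by simp)
      (Finset.disjoint_singleton_right.mpr hx)
      (by rw [Finset.sup_eq_union, Finset.union_comm, Finset.insert_eq])
  | ⟨P, some ⟨b, hb⟩⟩ => (P.avoid b).extend (b := insert x b)
      (by simp [Finset.insert_ne_empty])
      (by
        rw [Finset.disjoint_insert_right]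
        exact ⟨fun h => hx (Finset.mem_sdiff.mp h).1, Finset.sdiff_disjoint⟩)
      (by
        have hbs : b ⊆ s := P.le hb
        rw [Finset.sup_eq_union]
        ext y
        simp only [Finset.mem_union, Finset.mem_sdiff, Finset.mem_insert]
        have h1 : y ∈ b → y ∈ s := fun h => hbs h
        tauto)

lemma addTo_parts_none (hx : x ∉ s) (P : Finpartition s) :
    (addTo hx ⟨P, none⟩).parts = insert {x} P.parts := rfl

lemma addTo_parts_some (hx : x ∉ s) (P : Finpartition s) (b : Finset ℕ) (hb : b ∈ P.parts) :
    (addTo hx ⟨P, some ⟨b, hb⟩⟩).parts = insert (insert x b) (P.parts.erase b) := by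
  show insert (insert x b) (P.avoid b).parts = _
  rw [P.avoid_parts_of_mem hb]

lemma parts_subset_of_mem {t : Finset ℕ} {P : Finpartition t} {c : Finset ℕ}
    (hc : c ∈ P.parts) : c ⊆ t := P.le hc

lemma not_mem_parts_self {P : Finpartition s} (hx : x ∉ s) : ({x} : Finset ℕ) ∉ P.parts :=
  fun h => hx (P.le h (Finset.mem_singleton_self x))

lemma addTo_injective (hx : x ∉ s) : Function.Injective (addTo hx) := by
  rintro ⟨P, oP⟩ ⟨Q, oQ⟩ h
  have hparts := congrArg Finpartition.parts h
  -- helper: x not in any part of a partition of s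
  have hxP : ∀ {R : Finpartition s} {c : Finset ℕ}, c ∈ R.parts → x ∉ c :=
    fun {R c} hc hxc => hx (R.le hc hxc)
  match oP, oQ with
  | none, none =>
    rw [addTo_parts_none, addTo_parts_none] at hparts
    have : P.parts = Q.parts := by
      have h1 := congrArg (fun u => Finset.erase u {x}) hparts
      simpa [Finset.erase_insert (not_mem_parts_self hx),
        Finset.erase_insert (not_mem_parts_self (P := Q) hx)] using h1
    obtain rfl : P = Q := Finpartition.ext this
    rfl
  | none, some ⟨b, hb⟩ =>
    exfalso
    rw [addTo_parts_none, addTo_parts_some] at hparts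
    have h1 : ({x} : Finset ℕ) ∈ insert (insert x b) (Q.parts.erase b) := by
      rw [← hparts]; exact Finset.mem_insert_self _ _
    rcases Finset.mem_insert.mp h1 with h2 | h2
    · obtain ⟨y, hy⟩ := Q.nonempty_of_mem_parts hb
      have hyx : y ≠ x := fun hyx => hxP hb (hyx ▸ hy)
      have : y ∈ ({x} : Finset ℕ) := h2 ▸ Finset.mem_insert_of_mem hy
      exact hyx (Finset.mem_singleton.mp this)
    · exact not_mem_parts_self hx (Finset.mem_of_mem_erase h2)
  | some ⟨b, hb⟩, none =>
    exfalso
    rw [addTo_parts_none, addTo_parts_some] at hparts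
    have h1 : ({x} : Finset ℕ) ∈ insert (insert x b) (P.parts.erase b) := by
      rw [hparts]; exact Finset.mem_insert_self _ _
    rcases Finset.mem_insert.mp h1 with h2 | h2
    · obtain ⟨y, hy⟩ := P.nonempty_of_mem_parts hb
      have hyx : y ≠ x := fun hyx => hxP hb (hyx ▸ hy)
      have : y ∈ ({x} : Finset ℕ) := h2 ▸ Finset.mem_insert_of_mem hy
      exact hyx (Finset.mem_singleton.mp this)
    · exact not_mem_parts_self hx (Finset.mem_of_mem_erase h2)
  | some ⟨b, hb⟩, some ⟨c, hc⟩ =>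
    rw [addTo_parts_some, addTo_parts_some] at hparts
    -- insert x b = insert x c
    have hxb : x ∉ b := hxP hb
    have hxc : x ∉ c := hxP hc
    have h1 : insert x b ∈ insert (insert x c) (Q.parts.erase c) := by
      rw [← hparts]; exact Finset.mem_insert_self _ _
    have hbc : b = c := by
      rcases Finset.mem_insert.mp h1 with h2 | h2
      · have := congrArg (fun u => Finset.erase u x) h2
        simpa [Finset.erase_insert hxb, Finset.erase_insert hxc] using this
      · exact absurd (Finset.mem_insert_self x b)
          (fun hmem => hxP (Finset.mem_of_mem_erase h2) hmem)
    subst hbc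
    have hxnb : insert x b ∉ P.parts.erase b :=
      fun h => hxP (Finset.mem_of_mem_erase h) (Finset.mem_insert_self x b)
    have hxnb' : insert x b ∉ Q.parts.erase b :=
      fun h => hxP (Finset.mem_of_mem_erase h) (Finset.mem_insert_self x b)
    have herase : P.parts.erase b = Q.parts.erase b := by
      have h1 := congrArg (fun u => Finset.erase u (insert x b)) hparts
      simpa [Finset.erase_insert hxnb, Finset.erase_insert hxnb'] using h1
    have hPQ : P = Q := by
      apply Finpartition.ext
      rw [← Finset.insert_erase hb, ← Finset.insert_erase hc, herase]
    subst hPQ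
    rfl

lemma addTo_surjective (hx : x ∉ s) : Function.Surjective (addTo hx) := by
  intro Q
  have hxI : x ∈ insert x s := Finset.mem_insert_self x s
  set c := Q.part x with hc_def
  have hcQ : c ∈ Q.parts := Q.part_mem.2 hxI
  have hxco : x ∈ c := Q.mem_part hxI
  by_cases hcx : c = {x}
  · -- singleton case
    have hdel : insert x s \ {x} = s := by
      ext y
      by_cases hyx : y = x <;> simp [hyx, hx]
    refine ⟨⟨(Q.avoid {x}).copy hdel, none⟩, ?_⟩
    apply Finpartition.ext
    rw [addTo_parts_none]
    show insert {x} (Q.avoid {x}).parts = Q.parts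
    rw [Q.avoid_parts_of_mem (hcx ▸ hcQ), Finset.insert_erase (hcx ▸ hcQ)]
  · -- non-singleton case
    set b := c.erase x with hb_def
    have hxb : x ∉ b := Finset.notMem_erase _ _
    have hc_ib : insert x b = c := Finset.insert_erase hxco
    have hbne : b.Nonempty := by
      rcases Finset.eq_empty_or_nonempty b with he | hne
      · exfalso
        apply hcx
        rw [← hc_ib, he]
        simp
      · exact hne
    have hbs : b ⊆ s := by
      intro y hy
      have hyc : y ∈ c := Finset.mem_of_mem_erase hy
      have hys : y ∈ insert x s := Q.le hcQ hyc
      rcases Finset.mem_insert.mp hys with rfl | h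
      · exact absurd hy (Finset.notMem_erase _ _)
      · exact h
    have hdel : insert x s \ c = s \ b := by
      ext y
      simp only [Finset.mem_sdiff, Finset.mem_insert, hb_def, Finset.mem_erase]
      constructor
      · rintro ⟨(rfl | hy), hyc⟩
        · exact absurd hxco hyc
        · exact ⟨hy, fun h => hyc h.2⟩
      · rintro ⟨hy, hyb⟩
        exact ⟨Or.inr hy, fun hyc => hyb ⟨fun e => hx (e ▸ hy), hyc⟩⟩
    set P : Finpartition s := ((Q.avoid c).copy hdel).extend (b := b)
      (by intro h; exact absurd (h ▸ hbne) (by simp))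
      Finset.sdiff_disjoint
      (by rw [Finset.sup_eq_union, Finset.sdiff_union_of_subset hbs]) with hP_def
    have hPparts : P.parts = insert b (Q.parts.erase c) := by
      rw [hP_def]
      show insert b (Q.avoid c).parts = _
      rw [Q.avoid_parts_of_mem hcQ]
    have hbP : b ∈ P.parts := hPparts ▸ Finset.mem_insert_self _ _
    refine ⟨⟨P, some ⟨b, hbP⟩⟩, ?_⟩
    apply Finpartition.ext
    rw [addTo_parts_some, hc_ib]
    have hbnotQ : b ∉ Q.parts.erase c := by
      intro h
      have hbQ : b ∈ Q.parts := Finset.mem_of_mem_erase h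
      obtain ⟨y, hy⟩ := hbne
      have : b = c := Q.eq_of_mem_parts hbQ hcQ hy (Finset.mem_of_mem_erase hy)
      exact (Finset.ne_of_mem_erase h) this
    rw [hPparts, Finset.erase_insert hbnotQ, Finset.insert_erase hcQ]

lemma bell_step (hx : x ∉ s) :
    Fintype.card (Finpartition (insert x s)) =
      ∑ P : Finpartition s, (P.parts.card + 1) := by
  rw [← Fintype.card_of_bijective ⟨addTo_injective hx, addTo_surjective hx⟩]
  rw [Fintype.card_sigma]
  congr 1
  ext P
  rw [Fintype.card_option, Fintype.card_coe]

end Bell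

/-- the popularity `pc n` of left children among treeshelves of
size `n` avoiding "left child having a right child" satisfies
`pc n = (n+1)·b n − b (n+1)` with `b` the Bell numbers. -/
theorem stmt6 (n : ℕ) :
    ((∑ᶠ t ∈ {t : TShelf | TShelf.IsShelf n t ∧ t.avoidsLR = true}, t.numLeft : ℕ) : ℤ) =
      ((n : ℤ) + 1) * (Nat.card (Finpartition (Finset.Icc 1 n)) : ℤ) -
        (Nat.card (Finpartition (Finset.Icc 1 (n + 1))) : ℤ) := by
  classical
  set I := Finset.Icc 1 n with hI
  have hIcard : I.card = n := by simp [hI]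
  have hset : {t : TShelf | TShelf.IsShelf n t ∧ t.avoidsLR = true} = Set.range (G I) := by
    ext t
    simp only [Set.mem_setOf_eq, Set.mem_range]
    constructor
    · rintro ⟨⟨hlab, hinc⟩, hav⟩
      obtain ⟨P, hP⟩ := G_surjective I t hlab hinc hav
      exact ⟨P, hP⟩
    · rintro ⟨P, rfl⟩
      obtain ⟨h1, h2, h3, -⟩ := G_props I P
      exact ⟨⟨h1, h2⟩, h3⟩
  rw [hset, finsum_mem_range (G_injective I), finsum_eq_sum_of_fintype]
  push_cast
  have hterm : ∀ P : Finpartition I, ((G I P).numLeft : ℤ) = (n : ℤ) - P.parts.card := by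
    intro P
    obtain ⟨-, -, -, h4⟩ := G_props I P
    rw [hIcard] at h4
    omega
  rw [Finset.sum_congr rfl (fun P _ => hterm P), Finset.sum_sub_distrib,
    Finset.sum_const, Finset.card_univ]
  have hx : (n + 1) ∉ I := by simp [hI]
  have hins : insert (n + 1) I = Finset.Icc 1 (n + 1) := by
    ext y
    simp only [Finset.mem_insert, hI, Finset.mem_Icc]
    omega
  have hb := bell_step hx
  rw [hins] at hb
  have hc1 : Nat.card (Finpartition (Finset.Icc 1 n)) = Fintype.card (Finpartition I) := by
    rw [hI, Nat.card_eq_fintype_card]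
  have hc2 : Nat.card (Finpartition (Finset.Icc 1 (n + 1))) =
      Fintype.card (Finpartition (Finset.Icc 1 (n + 1))) := Nat.card_eq_fintype_card
  have hbZ : (Fintype.card (Finpartition (Finset.Icc 1 (n + 1))) : ℤ) =
      ∑ P : Finpartition I, ((P.parts.card : ℤ) + 1) := by
    rw [hb]
    push_cast
    rfl
  rw [Finset.sum_add_distrib, Finset.sum_const, Finset.card_univ] at hbZ
  rw [hc1, hc2]
  rw [nsmul_eq_mul] at *
  simp only [nsmul_eq_mul, smul_eq_mul, mul_one] at hbZ ⊢
  linarith
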